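/- Let X be a random vector in ℝ^p, m : ℝ^p → ℝ with m(X) square-integrable, and m_{−j}(X^{−j}) := E[m(X) | X^{−j}]. Let X̃ be a conditional resample of coordinate j of X: X̃^{−j} = X^{−j} and, conditionally on X^{−j}, X̃^j has the conditional law of X^j given X^{−j} and is conditionally independent of X^j. Then E[(m(X) − m(X̃))²] = 2 · ψ_TSI(j), where ψ_TSI(j) = E[(m(X) − m_{−j}(X^{−j}))²]. In particular, the population CPI with one conditional draw equals exactly twice the Total Sobol Index. -/

import Mathlib

open MeasureTheory ProbabilityTheory

noncomputable section

lemma integrable_mul_of_memℒp_two {α : Type*} [MeasurableSpace α] {μ : Measure α}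
    {f g : α → ℝ} (hf : MemLp f 2 μ) (hg : MemLp g 2 μ) :
    Integrable (fun x => f x * g x) μ := by
  have h : (fun x => f x * g x)
      = fun x => ((f x + g x) ^ 2 - f x ^ 2 - g x ^ 2) / 2 := by
    funext x; ring
  rw [h]
  exact (((hf.add hg).integrable_sq.sub hf.integrable_sq).sub hg.integrable_sq).div_const 2

lemma sq_integral_le_integral_sq {β : Type*} [MeasurableSpace β] {ν : Measure β}
    [IsProbabilityMeasure ν] {w : β → ℝ} (hw : AEStronglyMeasurable w ν)
    (hw2 : Integrable (fun y => w y ^ 2) ν) :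
    (∫ y, w y ∂ν) ^ 2 ≤ ∫ y, w y ^ 2 ∂ν := by
  have hm : MemLp w 2 ν := (memLp_two_iff_integrable_sq hw).mpr hw2
  have h := variance_nonneg w ν
  rw [variance_eq_sub hm] at h
  have : (ν[w ^ 2] : ℝ) = ∫ y, w y ^ 2 ∂ν := by rfl
  linarith [h]

/-- population CPI with one conditional draw is twice the TSI: if `X̃`
agrees with `X` off coordinate `j` and, conditionally on `X^{-j}`, `X̃^j` has the conditional
law of `X^j` given `X^{-j}` and is conditionally independent of `X^j`, then
`E[(m(X) - m(X̃))²] = 2 ψ_TSI(j)` where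
`ψ_TSI(j) = E[(m(X) - E[m(X) | X^{-j}])²]`. -/
theorem cpi_population_twice_tsi
    {Ω : Type*} [mΩ : MeasurableSpace Ω] [StandardBorelSpace Ω]
    (P : Measure Ω) [IsProbabilityMeasure P]
    {p : ℕ} (j : Fin p) (X Xt : Ω → Fin p → ℝ)
    (hX : Measurable X) (hXt : Measurable Xt)
    (m : (Fin p → ℝ) → ℝ) (hm : Measurable m)
    (hmL2 : MemLp (fun ω => m (X ω)) 2 P)
    (hagree : ∀ ω, ∀ l, l ≠ j → Xt ω l = X ω l)
    (hle : MeasurableSpace.comap (fun ω (i : {i : Fin p // i ≠ j}) => X ω i.1)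
        inferInstance ≤ mΩ)
    (hcondlaw : ∀ᵐ x ∂(P.map (fun ω (i : {i : Fin p // i ≠ j}) => X ω i.1)),
      condDistrib (fun ω => Xt ω j) (fun ω (i : {i : Fin p // i ≠ j}) => X ω i.1) P x
        = condDistrib (fun ω => X ω j) (fun ω (i : {i : Fin p // i ≠ j}) => X ω i.1) P x)
    (hcondindep : CondIndepFun
      (MeasurableSpace.comap (fun ω (i : {i : Fin p // i ≠ j}) => X ω i.1) inferInstance)
      hle (fun ω => Xt ω j) (fun ω => X ω j) P) :
    (∫ ω, (m (X ω) - m (Xt ω)) ^ 2 ∂P)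
      = 2 * ∫ ω, (m (X ω)
          - (P[(fun ω => m (X ω)) |
              MeasurableSpace.comap (fun ω (i : {i : Fin p // i ≠ j}) => X ω i.1)
                inferInstance]) ω) ^ 2 ∂P := by
  -- notation
  set Z : Ω → ({i : Fin p // i ≠ j} → ℝ) := fun ω i => X ω i.1 with hZdef
  have hZ : Measurable Z := measurable_pi_lambda _ fun i => (measurable_pi_apply i.1).comp hX
  set Y : Ω → ℝ := fun ω => X ω j with hYdef
  set Yt : Ω → ℝ := fun ω => Xt ω j with hYtdef
  have hY : Measurable Y := (measurable_pi_apply j).comp hX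
  have hYt : Measurable Yt := (measurable_pi_apply j).comp hXt
  set κ : Kernel ({i : Fin p // i ≠ j} → ℝ) ℝ := condDistrib Y Z P with hκdef
  set PZ : Measure ({i : Fin p // i ≠ j} → ℝ) := P.map Z with hPZdef
  -- reconstruction function
  set F : (({i : Fin p // i ≠ j} → ℝ) × ℝ) → ℝ :=
    fun q => m (fun l => if h : l = j then q.2 else q.1 ⟨l, h⟩) with hFdef
  have hFmeas : Measurable F := by
    apply hm.comp
    apply measurable_pi_lambda
    intro l
    by_cases h : l = j
    · simp only [h, dif_pos]
      exact measurable_snd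
    · simp only [dif_neg h]
      exact (measurable_pi_apply _).comp measurable_fst
  have hFX : ∀ ω, F (Z ω, Y ω) = m (X ω) := by
    intro ω
    simp only [hFdef]
    congr 1
    funext l
    by_cases h : l = j
    · subst h; simp; rfl
    · simp [h]; rfl
  have hFXt : ∀ ω, F (Z ω, Yt ω) = m (Xt ω) := by
    intro ω
    simp only [hFdef]
    congr 1
    funext l
    by_cases h : l = j
    · subst h; simp; rfl
    · simp [h, hagree ω l h]; rfl
  have hfL2 : MemLp (fun ω => F (Z ω, Y ω)) 2 P := by
    have h : (fun ω => F (Z ω, Y ω)) = fun ω => m (X ω) := funext hFX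
    rw [h]; exact hmL2
  have hpair : Measurable fun ω => (Z ω, Y ω) := hZ.prodMk hY
  have hpairt : Measurable fun ω => (Z ω, Yt ω) := hZ.prodMk hYt
  have law1 : P.map (fun ω => (Z ω, Y ω)) = PZ ⊗ₘ κ := by
    have h := Measure.disintegrate (P.map fun ω => (Z ω, Y ω)) (P.map fun ω => (Z ω, Y ω)).condKernel
    rw [Measure.fst_map_prodMk₀ hY.aemeasurable] at h
    rw [hκdef, condDistrib, hPZdef]
    exact h.symm
  have law1t : P.map (fun ω => (Z ω, Yt ω)) = PZ ⊗ₘ κ := by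
    have l1 : P.map (fun ω => (Z ω, Yt ω)) = PZ ⊗ₘ condDistrib Yt Z P := by
      have h := Measure.disintegrate (P.map fun ω => (Z ω, Yt ω)) (P.map fun ω => (Z ω, Yt ω)).condKernel
      rw [Measure.fst_map_prodMk₀ hYt.aemeasurable] at h
      rw [condDistrib, hPZdef]
      exact h.symm
    rw [l1]
    exact Measure.compProd_congr hcondlaw
  have hcondindep' : CondIndepFun (MeasurableSpace.comap Z inferInstance) hle Yt Y P :=
    hcondindep
  set W : Ω → ℝ × ℝ := fun ω => (Yt ω, Y ω) with hWdef
  have hW : Measurable W := hYt.prodMk hY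
  have hT : Measurable fun ω => (Z ω, W ω) := hZ.prodMk hW
  haveI : IsProbabilityMeasure PZ := by
    rw [hPZdef]; exact Measure.isProbabilityMeasure_map (hZ.aemeasurable : AEMeasurable Z P)
  have hprod : ∀ t u : Set ℝ, MeasurableSet t → MeasurableSet u →
      (P⟦Yt ⁻¹' t ∩ Y ⁻¹' u | MeasurableSpace.comap Z inferInstance⟧)
        =ᵐ[P] fun ω => (κ (Z ω) t).toReal * (κ (Z ω) u).toReal := by
    intro t u ht hu
    have h1 := (condIndepFun_iff_condExp_inter_preimage_eq_mul (μ := P) hYt hY).mp hcondindep' t u ht hu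
    have h2 := condDistrib_ae_eq_condExp (μ := P) hZ hYt ht
    have h3 := condDistrib_ae_eq_condExp (μ := P) hZ hY hu
    have h4 : ∀ᵐ ω ∂P, condDistrib Yt Z P (Z ω) = κ (Z ω) :=
      ae_of_ae_map hZ.aemeasurable hcondlaw
    filter_upwards [h1, h2, h3, h4] with ω e1 e2 e3 e4
    rw [e1, ← e2, ← e3, e4]; rfl
  have law3 : P.map (fun ω => (Z ω, W ω)) = PZ ⊗ₘ (κ ×ₖ κ) := by
    have key : ∀ s : Set ({i : Fin p // i ≠ j} → ℝ), MeasurableSet s →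
        ∀ v : Set (ℝ × ℝ), MeasurableSet v →
        P (Z ⁻¹' s ∩ W ⁻¹' v) = ∫⁻ z in s, (κ ×ₖ κ) z v ∂PZ := by
      intro s hs
      set ν₁ : Measure (ℝ × ℝ) := (P.restrict (Z ⁻¹' s)).map W with hν₁
      set ν₂ : Measure (ℝ × ℝ) := (PZ.restrict s).bind (κ ×ₖ κ) with hν₂
      have hν₁app : ∀ v : Set (ℝ × ℝ), MeasurableSet v →
          ν₁ v = P (Z ⁻¹' s ∩ W ⁻¹' v) := by
        intro v hv
        rw [hν₁, Measure.map_apply hW hv, Measure.restrict_apply (hW hv), Set.inter_comm]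
      have hν₂app : ∀ v : Set (ℝ × ℝ), MeasurableSet v →
          ν₂ v = ∫⁻ z in s, (κ ×ₖ κ) z v ∂PZ := by
        intro v hv
        rw [hν₂, Measure.bind_apply hv (Kernel.measurable _).aemeasurable]
      have huniv : ν₁ Set.univ = ν₂ Set.univ := by
        rw [hν₁app _ MeasurableSet.univ, hν₂app _ MeasurableSet.univ]
        simp only [Set.preimage_univ, Set.inter_univ]
        have h1 : ∫⁻ z in s, (κ ×ₖ κ) z Set.univ ∂PZ = ∫⁻ z in s, 1 ∂PZ := by
          apply lintegral_congr; intro z; exact measure_univ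
        rw [h1, setLIntegral_one, hPZdef, Measure.map_apply hZ hs]
      have hext : ν₁ = ν₂ := by
        haveI h₁ : IsFiniteMeasure ν₁ :=
          ⟨by rw [hν₁app _ MeasurableSet.univ]; exact measure_lt_top P _⟩
        haveI h₂ : IsFiniteMeasure ν₂ :=
          ⟨by rw [← huniv, hν₁app _ MeasurableSet.univ]; exact measure_lt_top P _⟩
        refine ext_of_generate_finite _ generateFrom_prod.symm isPiSystem_prod ?_ huniv
        rintro A hA
        rw [Set.mem_image2] at hA
        obtain ⟨t, ht, u, hu, rfl⟩ := hA
        replace ht : MeasurableSet t := ht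
        replace hu : MeasurableSet u := hu
        rw [hν₁app _ (ht.prod hu), hν₂app _ (ht.prod hu)]
        have hWpre : W ⁻¹' (t ×ˢ u) = Yt ⁻¹' t ∩ Y ⁻¹' u := Set.mk_preimage_prod _ _
        have hBmeas : MeasurableSet (Yt ⁻¹' t ∩ Y ⁻¹' u) := (hYt ht).inter (hY hu)
        have hsΩ : MeasurableSet (Z ⁻¹' s) := hZ hs
        have hker : ∀ z, (κ ×ₖ κ) z (t ×ˢ u) = κ z t * κ z u := by
          intro z
          rw [Kernel.prod_apply, Measure.prod_prod]
        have hR_ne : ∫⁻ z in s, (κ ×ₖ κ) z (t ×ˢ u) ∂PZ ≠ ⊤ := by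
          refine ne_of_lt (lt_of_le_of_lt (le_trans (lintegral_mono fun z => ?_)
            (le_of_eq (setLIntegral_one s))) (measure_lt_top PZ s))
          exact prob_le_one
        have hInd : Integrable ((Yt ⁻¹' t ∩ Y ⁻¹' u).indicator fun _ => (1 : ℝ)) P :=
          (integrable_const (1 : ℝ)).indicator hBmeas
        have i0 : ∫ ω in Z ⁻¹' s, (Yt ⁻¹' t ∩ Y ⁻¹' u).indicator (fun _ => (1 : ℝ)) ω ∂P
            = (P (Z ⁻¹' s ∩ (Yt ⁻¹' t ∩ Y ⁻¹' u))).toReal := by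
          rw [integral_indicator_const (1 : ℝ) hBmeas, measureReal_def, Measure.restrict_apply hBmeas,
            smul_eq_mul, mul_one, Set.inter_comm]
        have i1 := setIntegral_condExp hle hInd (show MeasurableSet[MeasurableSpace.comap Z
          inferInstance] (Z ⁻¹' s) from ⟨s, hs, rfl⟩)
        have i2 : ∫ ω in Z ⁻¹' s,
              (P⟦Yt ⁻¹' t ∩ Y ⁻¹' u | MeasurableSpace.comap Z inferInstance⟧) ω ∂P
            = ∫ ω in Z ⁻¹' s, (κ (Z ω) t).toReal * (κ (Z ω) u).toReal ∂P :=
          setIntegral_congr_ae hsΩ ((hprod t u ht hu).mono fun ω h _ => h)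
        have hmeasTR : Measurable fun z => (κ z t).toReal * (κ z u).toReal :=
          ((κ.measurable_coe ht).ennreal_toReal).mul ((κ.measurable_coe hu).ennreal_toReal)
        have i3 : ∫ z in s, (κ z t).toReal * (κ z u).toReal ∂PZ
            = ∫ ω in Z ⁻¹' s, (κ (Z ω) t).toReal * (κ (Z ω) u).toReal ∂P := by
          rw [hPZdef, setIntegral_map hs hmeasTR.aestronglyMeasurable hZ.aemeasurable]
        have i4 : ∫ z in s, (κ z t).toReal * (κ z u).toReal ∂PZ
            = (∫⁻ z in s, (κ ×ₖ κ) z (t ×ˢ u) ∂PZ).toReal := by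
          simp only [hker]
          rw [← integral_toReal (f := fun z => κ z t * κ z u) ((κ.measurable_coe ht).mul (κ.measurable_coe hu)).aemeasurable
            (ae_of_all _ fun z => ENNReal.mul_lt_top (measure_lt_top _ _) (measure_lt_top _ _))]
          exact integral_congr_ae (ae_of_all _ fun z => (ENNReal.toReal_mul).symm)
        have hTR : (P (Z ⁻¹' s ∩ W ⁻¹' (t ×ˢ u))).toReal
            = (∫⁻ z in s, (κ ×ₖ κ) z (t ×ˢ u) ∂PZ).toReal := by
          rw [hWpre, ← i0, ← i1, i2, ← i3, i4]
        rw [hWpre] at hTR ⊢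
        exact (ENNReal.toReal_eq_toReal_iff' (measure_ne_top P _) hR_ne).mp hTR
      intro v hv
      rw [← hν₁app v hv, hext, hν₂app v hv]
    haveI : IsProbabilityMeasure (P.map (fun ω => (Z ω, W ω))) :=
      Measure.isProbabilityMeasure_map hT.aemeasurable
    haveI : IsProbabilityMeasure (PZ ⊗ₘ (κ ×ₖ κ)) := by infer_instance
    refine ext_of_generate_finite _ generateFrom_prod.symm isPiSystem_prod ?_ (by simp)
    rintro A hA
    rw [Set.mem_image2] at hA
    obtain ⟨s, hs, v, hv, rfl⟩ := hA
    replace hs : MeasurableSet s := hs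
    replace hv : MeasurableSet v := hv
    rw [Measure.map_apply hT (hs.prod hv), Measure.compProd_apply_prod hs hv, ← key s hs v hv]
    congr 1
  -- the conditional mean function
  set hfun : ({i : Fin p // i ≠ j} → ℝ) → ℝ := fun z => ∫ y, F (z, y) ∂κ z with hhdef
  have hhsm : StronglyMeasurable hfun :=
    hFmeas.stronglyMeasurable.integral_kernel_prod_right'
  have hFL2 : MemLp F 2 (PZ ⊗ₘ κ) := by
    rw [← law1]
    exact (memLp_map_measure_iff hFmeas.aestronglyMeasurable hpair.aemeasurable).mpr hfL2
  have hgL2 : MemLp (fun ω => F (Z ω, Yt ω)) 2 P := by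
    have h := hFL2
    rw [← law1t] at h
    exact (memLp_map_measure_iff hFmeas.aestronglyMeasurable hpairt.aemeasurable).mp h
  have hFint : Integrable F (PZ ⊗ₘ κ) := hFL2.integrable one_le_two
  have hF2int : Integrable (fun q => F q ^ 2) (PZ ⊗ₘ κ) := hFL2.integrable_sq
  have hsec := (Measure.integrable_compProd_iff hFint.aestronglyMeasurable).mp hFint
  have hsec2 := (Measure.integrable_compProd_iff hF2int.aestronglyMeasurable).mp hF2int
  have hHint : Integrable (fun z => ∫ y, F (z, y) ^ 2 ∂κ z) PZ := by
    refine hsec2.2.congr (ae_of_all _ fun z => ?_)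
    refine integral_congr_ae (ae_of_all _ fun y => ?_)
    show ‖F (z, y) ^ 2‖ = F (z, y) ^ 2
    rw [Real.norm_eq_abs, abs_of_nonneg (sq_nonneg _)]
  have hhL2 : MemLp hfun 2 PZ := by
    refine (memLp_two_iff_integrable_sq hhsm.aestronglyMeasurable).mpr ?_
    refine Integrable.mono' hHint ((hhsm.measurable.pow_const 2).aestronglyMeasurable) ?_
    filter_upwards [hsec.1, hsec2.1] with z h1 h2
    rw [Real.norm_eq_abs, abs_of_nonneg (sq_nonneg _)]
    exact sq_integral_le_integral_sq
      ((hFmeas.comp measurable_prodMk_left).aestronglyMeasurable) h2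
  have huL2 : MemLp (fun ω => hfun (Z ω)) 2 P :=
    (memLp_map_measure_iff hhsm.aestronglyMeasurable hZ.aemeasurable).mp hhL2
  have hfint : Integrable (fun ω => F (Z ω, Y ω)) P := hfL2.integrable one_le_two
  have hμc : P[(fun ω => m (X ω)) | MeasurableSpace.comap Z inferInstance]
      =ᵐ[P] fun ω => hfun (Z ω) := by
    have hrw : (fun ω => m (X ω)) = fun ω => F (Z ω, Y ω) := funext fun ω => (hFX ω).symm
    rw [hrw]
    exact condExp_prod_ae_eq_integral_condDistrib hZ hY.aemeasurable
      hFmeas.stronglyMeasurable hfint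
  set A := ∫ q, F q ^ 2 ∂(PZ ⊗ₘ κ) with hA
  set B := ∫ z, hfun z ^ 2 ∂PZ with hB
  have intf2 : ∫ ω, F (Z ω, Y ω) ^ 2 ∂P = A := by
    rw [hA, ← law1, integral_map hpair.aemeasurable
      ((hFmeas.pow_const 2).aestronglyMeasurable)]
  have intg2 : ∫ ω, F (Z ω, Yt ω) ^ 2 ∂P = A := by
    rw [hA, ← law1t, integral_map hpairt.aemeasurable
      ((hFmeas.pow_const 2).aestronglyMeasurable)]
  have hfgint : Integrable (fun ω => F (Z ω, Yt ω) * F (Z ω, Y ω)) P :=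
    integrable_mul_of_memℒp_two hgL2 hfL2
  have intfg : ∫ ω, F (Z ω, Yt ω) * F (Z ω, Y ω) ∂P = B := by
    have hGmeas : Measurable fun q : ({i : Fin p // i ≠ j} → ℝ) × (ℝ × ℝ) =>
        F (q.1, q.2.1) * F (q.1, q.2.2) :=
      (hFmeas.comp (measurable_fst.prodMk (measurable_fst.comp measurable_snd))).mul
        (hFmeas.comp (measurable_fst.prodMk (measurable_snd.comp measurable_snd)))
    have h1 : ∫ ω, F (Z ω, Yt ω) * F (Z ω, Y ω) ∂P
        = ∫ q : ({i : Fin p // i ≠ j} → ℝ) × (ℝ × ℝ), F (q.1, q.2.1) * F (q.1, q.2.2)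
            ∂(P.map fun ω => (Z ω, W ω)) := by
      rw [integral_map hT.aemeasurable hGmeas.aestronglyMeasurable]
    have hGint : Integrable (fun q : ({i : Fin p // i ≠ j} → ℝ) × (ℝ × ℝ) =>
        F (q.1, q.2.1) * F (q.1, q.2.2)) (PZ ⊗ₘ (κ ×ₖ κ)) := by
      rw [← law3]
      exact (integrable_map_measure hGmeas.aestronglyMeasurable hT.aemeasurable).mpr hfgint
    rw [h1, law3, Measure.integral_compProd hGint]
    have h2 : ∀ z, ∫ yz : ℝ × ℝ, F (z, yz.1) * F (z, yz.2) ∂((κ ×ₖ κ) z)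
        = hfun z * hfun z := by
      intro z
      rw [Kernel.prod_apply]
      exact integral_prod_mul (f := fun y => F (z, y)) (g := fun y => F (z, y))
    rw [integral_congr_ae (ae_of_all _ h2), hB]
    exact integral_congr_ae (ae_of_all _ fun z => (pow_two (hfun z)).symm)
  have hfuint : Integrable (fun ω => F (Z ω, Y ω) * hfun (Z ω)) P :=
    integrable_mul_of_memℒp_two hfL2 huL2
  have intfu : ∫ ω, F (Z ω, Y ω) * hfun (Z ω) ∂P = B := by
    have hGmeas : Measurable fun q : ({i : Fin p // i ≠ j} → ℝ) × ℝ => F q * hfun q.1 :=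
      hFmeas.mul (hhsm.measurable.comp measurable_fst)
    have h1 : ∫ ω, F (Z ω, Y ω) * hfun (Z ω) ∂P
        = ∫ q, F q * hfun q.1 ∂(P.map fun ω => (Z ω, Y ω)) := by
      rw [integral_map hpair.aemeasurable hGmeas.aestronglyMeasurable]
    have hGint : Integrable (fun q : ({i : Fin p // i ≠ j} → ℝ) × ℝ => F q * hfun q.1)
        (PZ ⊗ₘ κ) := by
      rw [← law1]
      exact (integrable_map_measure hGmeas.aestronglyMeasurable hpair.aemeasurable).mpr hfuint
    rw [h1, law1, Measure.integral_compProd hGint]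
    have h2 : ∀ z, ∫ y, F (z, y) * hfun z ∂κ z = hfun z ^ 2 := by
      intro z
      rw [integral_mul_const, pow_two]
    rw [integral_congr_ae (ae_of_all _ h2), hB]
  have intu2 : ∫ ω, hfun (Z ω) ^ 2 ∂P = B := by
    rw [hB]
    exact (integral_map hZ.aemeasurable
      ((hhsm.measurable.pow_const 2).aestronglyMeasurable)).symm
  have hgint2 : Integrable (fun ω => F (Z ω, Yt ω) ^ 2) P := hgL2.integrable_sq
  have hfint2 : Integrable (fun ω => F (Z ω, Y ω) ^ 2) P := hfL2.integrable_sq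
  have hu2int : Integrable (fun ω => hfun (Z ω) ^ 2) P := huL2.integrable_sq
  have hLHS : ∫ ω, (m (X ω) - m (Xt ω)) ^ 2 ∂P = A - 2 * B + A := by
    have e : ∀ ω, (m (X ω) - m (Xt ω)) ^ 2
        = F (Z ω, Y ω) ^ 2 - 2 * (F (Z ω, Yt ω) * F (Z ω, Y ω)) + F (Z ω, Yt ω) ^ 2 := by
      intro ω; rw [← hFX ω, ← hFXt ω]; ring
    have h1 : Integrable (fun ω => F (Z ω, Y ω) ^ 2
        - 2 * (F (Z ω, Yt ω) * F (Z ω, Y ω))) P := hfint2.sub (hfgint.const_mul 2)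
    rw [integral_congr_ae (ae_of_all _ e), integral_add h1 hgint2,
      integral_sub hfint2 (hfgint.const_mul 2), integral_const_mul 2, intfg, intf2, intg2]
  have hRHS : ∫ ω, (m (X ω)
      - (P[(fun ω => m (X ω)) | MeasurableSpace.comap Z inferInstance]) ω) ^ 2 ∂P
      = A - B := by
    have e : (fun ω => (m (X ω)
        - (P[(fun ω => m (X ω)) | MeasurableSpace.comap Z inferInstance]) ω) ^ 2)
        =ᵐ[P] fun ω => F (Z ω, Y ω) ^ 2 - 2 * (F (Z ω, Y ω) * hfun (Z ω)) + hfun (Z ω) ^ 2 := by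
      filter_upwards [hμc] with ω hω
      rw [hω, ← hFX ω]
      ring
    have h1 : Integrable (fun ω => F (Z ω, Y ω) ^ 2
        - 2 * (F (Z ω, Y ω) * hfun (Z ω))) P := hfint2.sub (hfuint.const_mul 2)
    rw [integral_congr_ae e, integral_add h1 hu2int,
      integral_sub hfint2 (hfuint.const_mul 2), integral_const_mul 2, intfu, intf2, intu2]
    ring
  rw [hLHS, hRHS]
  ring

end
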